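/- Define K : ℝ² \ {0} → ℝ² by Kₐ = (1/(4x_cx^c))·((x_cx^c)² ε_{ab}x^b - 4xₐ). Then the tensor E_{ab} = ∂ₐK_b + KₐK_b + P_{ab} - (1/2)(∂_cK^c + K_cK^c)δ_{ab}, with P_{ab} = x_{(a}ε_{b)c}x^c, is not identically zero on ℝ² \ {0}; moreover ∂_{[a}K_{b]} ≠ 0, so K is not closed. -/

import Mathlib

noncomputable def pd1 (f : ℝ → ℝ → ℝ) (x y : ℝ) : ℝ := deriv (fun t => f t y) x
noncomputable def pd2 (f : ℝ → ℝ → ℝ) (x y : ℝ) : ℝ := deriv (fun t => f x t) y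

lemma aux_d1K2 :
    deriv (fun t : ℝ => (-(t ^ 2 + 0 ^ 2) ^ 2 * t - 4 * 0) / (4 * (t ^ 2 + 0 ^ 2))) 1
      = -3/4 := by
  have h0 := (hasDerivAt_pow 2 (1:ℝ)).add_const ((0:ℝ) ^ 2)
  have hnum := ((h0.pow 2).neg.mul (hasDerivAt_id (1:ℝ))).sub_const ((4:ℝ) * 0)
  have hden := h0.const_mul (4:ℝ)
  have h := hnum.div hden (by norm_num)
  have h' : HasDerivAt
      (fun t : ℝ => (-(t ^ 2 + 0 ^ 2) ^ 2 * t - 4 * 0) / (4 * (t ^ 2 + 0 ^ 2)))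
      (-3/4) 1 := by
    refine h.congr_deriv ?_
    norm_num
  exact h'.deriv

lemma aux_d2K1 :
    deriv (fun t : ℝ => ((1 ^ 2 + t ^ 2) ^ 2 * t - 4 * 1) / (4 * (1 ^ 2 + t ^ 2))) 0
      = 1/4 := by
  have h0 := (hasDerivAt_pow 2 (0:ℝ)).const_add ((1:ℝ) ^ 2)
  have hnum := ((h0.pow 2).mul (hasDerivAt_id (0:ℝ))).sub_const ((4:ℝ) * 1)
  have hden := h0.const_mul (4:ℝ)
  have h := hnum.div hden (by norm_num)
  have h' : HasDerivAt
      (fun t : ℝ => ((1 ^ 2 + t ^ 2) ^ 2 * t - 4 * 1) / (4 * (1 ^ 2 + t ^ 2)))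
      (1/4) 0 := by
    refine h.congr_deriv ?_
    norm_num
  exact h'.deriv

lemma aux_d1K1 :
    deriv (fun t : ℝ => ((t ^ 2 + 0 ^ 2) ^ 2 * 0 - 4 * t) / (4 * (t ^ 2 + 0 ^ 2))) 1
      = 1 := by
  have h0 := (hasDerivAt_pow 2 (1:ℝ)).add_const ((0:ℝ) ^ 2)
  have hnum := ((h0.pow 2).mul_const (0:ℝ)).sub ((hasDerivAt_id (1:ℝ)).const_mul 4)
  have hden := h0.const_mul (4:ℝ)
  have h := hnum.div hden (by norm_num)
  have h' : HasDerivAt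
      (fun t : ℝ => ((t ^ 2 + 0 ^ 2) ^ 2 * 0 - 4 * t) / (4 * (t ^ 2 + 0 ^ 2)))
      1 1 := by
    refine h.congr_deriv ?_
    norm_num
  exact h'.deriv

lemma aux_d2K2 :
    deriv (fun t : ℝ => (-(1 ^ 2 + t ^ 2) ^ 2 * 1 - 4 * t) / (4 * (1 ^ 2 + t ^ 2))) 0
      = -1 := by
  have h0 := (hasDerivAt_pow 2 (0:ℝ)).const_add ((1:ℝ) ^ 2)
  have hnum := ((h0.pow 2).neg.mul_const (1:ℝ)).sub ((hasDerivAt_id (0:ℝ)).const_mul 4)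
  have hden := h0.const_mul (4:ℝ)
  have h := hnum.div hden (by norm_num)
  have h' : HasDerivAt
      (fun t : ℝ => (-(1 ^ 2 + t ^ 2) ^ 2 * 1 - 4 * t) / (4 * (1 ^ 2 + t ^ 2)))
      (-1) 0 := by
    refine h.congr_deriv ?_
    norm_num
  exact h'.deriv

/-- for Kₐ = (1/(4x_cx^c))·((x_cx^c)²ε_{ab}x^b - 4xₐ) on
ℝ² \ {0}, i.e. K₁ = ((x²+y²)²y - 4x)/(4(x²+y²)), K₂ = (-(x²+y²)²x - 4y)/(4(x²+y²)),
and P_{ab} = x_{(a}ε_{b)c}x^c (P₁₁ = xy, P₁₂ = (y²-x²)/2, P₂₂ = -xy), the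
obstruction tensor E_{ab} is not identically zero on ℝ² \ {0}, and
∂_{[a}K_{b]} ≠ 0 (K is not closed). -/
theorem stmt17
    (K1 K2 P11 P12 P22 : ℝ → ℝ → ℝ)
    (hK1 : K1 = fun x y => ((x ^ 2 + y ^ 2) ^ 2 * y - 4 * x) / (4 * (x ^ 2 + y ^ 2)))
    (hK2 : K2 = fun x y => (-(x ^ 2 + y ^ 2) ^ 2 * x - 4 * y) / (4 * (x ^ 2 + y ^ 2)))
    (hP11 : P11 = fun x y => x * y)
    (hP12 : P12 = fun x y => (y ^ 2 - x ^ 2) / 2)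
    (hP22 : P22 = fun x y => -(x * y)) :
    (¬ ∀ x y : ℝ, (x, y) ≠ (0, 0) →
      (pd1 K1 x y + K1 x y * K1 x y + P11 x y
        - (1/2) * (pd1 K1 x y + pd2 K2 x y + K1 x y ^ 2 + K2 x y ^ 2) = 0 ∧
       pd1 K2 x y + K1 x y * K2 x y + P12 x y = 0 ∧
       pd2 K1 x y + K2 x y * K1 x y + P12 x y = 0 ∧
       pd2 K2 x y + K2 x y * K2 x y + P22 x y
        - (1/2) * (pd1 K1 x y + pd2 K2 x y + K1 x y ^ 2 + K2 x y ^ 2) = 0)) ∧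
    (∃ x y : ℝ, (x, y) ≠ (0, 0) ∧ pd1 K2 x y - pd2 K1 x y ≠ 0) := by
  subst hK1 hK2 hP11 hP12 hP22
  constructor
  · intro h
    have h2 := (h 1 0 (by simp)).2.1
    rw [show pd1 (fun x y => (-(x ^ 2 + y ^ 2) ^ 2 * x - 4 * y) / (4 * (x ^ 2 + y ^ 2))) 1 0
        = deriv (fun t : ℝ => (-(t ^ 2 + 0 ^ 2) ^ 2 * t - 4 * 0) / (4 * (t ^ 2 + 0 ^ 2))) 1
        from rfl, aux_d1K2] at h2
    norm_num at h2
  · refine ⟨1, 0, by simp, ?_⟩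
    rw [show pd1 (fun x y => (-(x ^ 2 + y ^ 2) ^ 2 * x - 4 * y) / (4 * (x ^ 2 + y ^ 2))) 1 0
        = deriv (fun t : ℝ => (-(t ^ 2 + 0 ^ 2) ^ 2 * t - 4 * 0) / (4 * (t ^ 2 + 0 ^ 2))) 1
        from rfl, aux_d1K2,
      show pd2 (fun x y => ((x ^ 2 + y ^ 2) ^ 2 * y - 4 * x) / (4 * (x ^ 2 + y ^ 2))) 1 0
        = deriv (fun t : ℝ => ((1 ^ 2 + t ^ 2) ^ 2 * t - 4 * 1) / (4 * (1 ^ 2 + t ^ 2))) 0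
        from rfl, aux_d2K1]
    norm_num
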